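/- Let T be a tree on n vertices. Then wr(T) = hom(T, P_3°) ≥ 2√2 · (1+√2)^{n-1}. -/

import Mathlib

open SimpleGraph

/-- Number of Widom-Rowlinson configurations of a graph: colorings of the vertices with
red (0), white (1) and blue (2) such that no red vertex is adjacent to a blue vertex. -/
noncomputable def wrCount {V : Type*} (H : SimpleGraph V) : ℕ :=
  Nat.card {c : V → Fin 3 // ∀ a b, H.Adj a b → ¬(c a = 0 ∧ c b = 2)}

private def pellY : ℕ → ℕ
  | 0 => 1
  | 1 => 1
  | (k+2) => 2 * pellY (k+1) + pellY k

private lemma pellY_rec (k : ℕ) : pellY (k+2) = 2 * pellY (k+1) + pellY k := rfl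

private lemma pellY_pos (k : ℕ) : 1 ≤ pellY k := by
  induction k using Nat.strong_induction_on with
  | _ k IH =>
    match k with
    | 0 => simp [pellY]
    | 1 => simp [pellY]
    | (k+2) =>
      have := IH k (by omega)
      rw [pellY_rec]; omega

private lemma pellY_mono : Monotone pellY := by
  apply monotone_nat_of_le_succ
  intro k
  match k with
  | 0 => simp [pellY]
  | (k+1) => rw [pellY_rec]; have := pellY_pos (k+1); omega

private lemma pellY_le_pow3 (k : ℕ) : pellY (k+1) ≤ 3 ^ k := by
  induction k using Nat.strong_induction_on with
  | _ k IH =>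
    match k with
    | 0 => simp [pellY]
    | 1 => simp [pellY, pellY_rec]
    | (k+2) =>
      have h1 := IH (k+1) (by omega)
      have h2 := IH k (by omega)
      rw [pellY_rec]
      have h4 : (3:ℕ)^(k+2) = 2 * 3^(k+1) + 3 * 3^k := by ring
      rw [h4]
      have h3 : (3:ℕ)^k ≤ 3^(k+1) := Nat.pow_le_pow_right (by norm_num) (by omega)
      omega

private lemma exists_leaf {V : Type*} [Fintype V] (F : SimpleGraph V) (hF : F.IsAcyclic)
    (hE : ∃ a b, F.Adj a b) : ∃ ℓ u, F.Adj ℓ u ∧ ∀ w, F.Adj ℓ w → w = u := by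
  classical
  obtain ⟨a0, b0, hab⟩ := hE
  set L : Set ℕ := {k | ∃ (x y : V) (p : F.Walk x y), p.IsPath ∧ p.length = k} with hL
  have h1L : 1 ∈ L := by
    refine ⟨a0, b0, Walk.cons hab Walk.nil, ?_, rfl⟩
    simp [Walk.cons_isPath_iff, hab.ne]
  have hbdd : BddAbove L := by
    refine ⟨Fintype.card V, ?_⟩
    rintro k ⟨x, y, p, hp, rfl⟩
    exact le_of_lt hp.length_lt
  have hM : sSup L ∈ L := Nat.sSup_mem ⟨1, h1L⟩ hbdd
  set M := sSup L with hMdef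
  have hM1 : 1 ≤ M := le_csSup hbdd h1L
  obtain ⟨x, y, p, hp, hlen⟩ := hM
  cases p with
  | nil => simp at hlen; omega
  | @cons _ z _ hyz p' =>
    rw [Walk.cons_isPath_iff] at hp
    obtain ⟨hp', hxs⟩ := hp
    refine ⟨x, z, hyz, ?_⟩
    intro w hw
    by_contra hwz
    have hwx : w ≠ x := fun h => F.irrefl (h ▸ hw)
    by_cases hws : w ∈ p'.support
    · set d := p'.takeUntil w hws with hd
      have hdp : d.IsPath := hp'.takeUntil hws
      have hxd : x ∉ d.support := fun h => hxs (Walk.support_takeUntil_subset _ hws h)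
      have hq : (Walk.cons hyz d).IsPath := by
        rw [Walk.cons_isPath_iff]; exact ⟨hdp, hxd⟩
      have hcyc : (Walk.cons hw.symm (Walk.cons hyz d)).IsCycle := by
        rw [Walk.cons_isCycle_iff]
        refine ⟨hq, ?_⟩
        intro hmem
        rw [Walk.edges_cons] at hmem
        rcases List.mem_cons.mp hmem with h | h
        · rw [Sym2.eq_iff] at h
          rcases h with ⟨h1, h2⟩ | ⟨h1, h2⟩
          · exact hwx h1
          · exact hwz h1
        · exact hxd (Walk.snd_mem_support_of_mem_edges d h)
      exact hF _ hcyc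
    · have hwsup : w ∉ (Walk.cons hyz p').support := by
        rw [Walk.support_cons]
        intro h
        rcases List.mem_cons.mp h with h | h
        · exact hwx h
        · exact hws h
      have hext : (Walk.cons hw.symm (Walk.cons hyz p')).IsPath := by
        rw [Walk.cons_isPath_iff]
        exact ⟨by rw [Walk.cons_isPath_iff]; exact ⟨hp', hxs⟩, hwsup⟩
      have hmem : M + 1 ∈ L := ⟨w, y, _, hext, by simp [Walk.length_cons] at hlen ⊢; omega⟩
      have := le_csSup hbdd hmem
      omega


universe u

private lemma main_bound : ∀ (n : ℕ) (V : Type u) [Fintype V] (F : SimpleGraph V),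
    F.IsAcyclic → Fintype.card V = n → ∀ S : Finset V,
    pellY (n + 1 - S.card) ≤
      Nat.card {c : V → Fin 3 // (∀ a b, F.Adj a b → ¬(c a = 0 ∧ c b = 2)) ∧ ∀ v ∈ S, c v = 1} := by
  intro n
  induction n using Nat.strong_induction_on with
  | _ n IH =>
  intro V _ F hF hcard S
  classical
  have hsn0 : S.card ≤ n := by
    have := Finset.card_le_univ S
    rwa [hcard] at this
  by_cases hE : ∃ a b, F.Adj a b
  swap
  · -- no edges
    push_neg at hE
    have he : n + 1 - S.card = (n - S.card) + 1 := by omega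
    have hcount : Nat.card ({v : V // v ∉ S} → Fin 3) ≤
        Nat.card {c : V → Fin 3 // (∀ a b, F.Adj a b → ¬(c a = 0 ∧ c b = 2)) ∧
          ∀ v ∈ S, c v = 1} := by
      obtain ⟨f, hinj⟩ : ∃ f : ({v : V // v ∉ S} → Fin 3) →
          {c : V → Fin 3 // (∀ a b, F.Adj a b → ¬(c a = 0 ∧ c b = 2)) ∧ ∀ v ∈ S, c v = 1},
          Function.Injective f := by
        refine ⟨fun c' => ⟨fun v => if h : v ∈ S then 1 else c' ⟨v, h⟩,
          fun a b hab => absurd hab (hE a b), fun v hv => by simp [hv]⟩, ?_⟩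
        intro a b h
        funext v
        have hval : (fun w => if h : w ∈ S then (1:Fin 3) else a ⟨w, h⟩)
            = (fun w => if h : w ∈ S then (1:Fin 3) else b ⟨w, h⟩) := congrArg Subtype.val h
        have := congrFun hval v.1
        rwa [dif_neg v.2, dif_neg v.2] at this
      exact Nat.card_le_card_of_injective f hinj
    have hcf : Nat.card ({v : V // v ∉ S} → Fin 3) = 3 ^ (n - S.card) := by
      rw [Nat.card_eq_fintype_card, Fintype.card_fun, Fintype.card_fin]
      congr 1
      rw [Fintype.card_subtype_compl, hcard]
      congr 1
      exact Fintype.card_coe S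
    rw [hcf] at hcount
    refine le_trans ?_ hcount
    rw [he]
    exact pellY_le_pow3 _
  · obtain ⟨ℓ, u, hadj, huniq⟩ := exists_leaf F hF hE
    have hne : Nonempty V := ⟨ℓ⟩
    have hn1 : 1 ≤ n := by rw [← hcard]; exact Fintype.card_pos
    have huℓ : u ≠ ℓ := fun h => F.irrefl (h ▸ hadj)
    set V' := {v : V // v ≠ ℓ} with hV'
    set F' : SimpleGraph V' := SimpleGraph.comap Subtype.val F with hF'def
    have hF' : F'.IsAcyclic := by
      rw [isAcyclic_iff_path_unique] at hF ⊢
      intro a b p q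
      have hinjf : Function.Injective ⇑(SimpleGraph.Hom.comap (Subtype.val : V' → V) F) :=
        fun a b h => Subtype.val_injective h
      exact Path.map_injective hinjf a b
        (hF (p.map _ hinjf) (q.map _ hinjf))
    have hcV' : Fintype.card V' = n - 1 := by
      have h1 : Fintype.card V' = Fintype.card V - Fintype.card {v : V // v = ℓ} :=
        Fintype.card_subtype_compl _
      rw [Fintype.card_subtype_eq] at h1
      rw [h1, hcard]
    set u' : V' := ⟨u, huℓ⟩ with hu'
    set S' : Finset V' := S.subtype (· ≠ ℓ) with hS'
    set ext : (V' → Fin 3) → Fin 3 → (V → Fin 3) :=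
      fun c' i v => if h : v = ℓ then i else c' ⟨v, h⟩ with hext
    have ext_ne : ∀ (c' : V' → Fin 3) (i : Fin 3) (v : V) (h : v ≠ ℓ),
        ext c' i v = c' ⟨v, h⟩ := by
      intro c' i v h
      simp only [hext]
      exact dif_neg h
    have ext_at : ∀ (c' : V' → Fin 3) (i : Fin 3) (v : V'), ext c' i v.1 = c' v := by
      intro c' i v
      rw [ext_ne c' i v.1 v.2]
    have ext_ℓ : ∀ c' i, ext c' i ℓ = i := by intro c' i; simp [hext]
    have hrest : ∀ (c1 c2 : V' → Fin 3) (i1 i2 : Fin 3), ext c1 i1 = ext c2 i2 → c1 = c2 := by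
      intro c1 c2 i1 i2 h
      funext v
      have := congrFun h v.1
      rwa [ext_at, ext_at] at this
    have hℓval : ∀ (c1 c2 : V' → Fin 3) (i1 i2 : Fin 3), ext c1 i1 = ext c2 i2 → i1 = i2 := by
      intro c1 c2 i1 i2 h
      have := congrFun h ℓ
      rwa [ext_ℓ, ext_ℓ] at this
    have ext_valid : ∀ (c' : V' → Fin 3) (i : Fin 3),
        (∀ a b : V', F'.Adj a b → ¬(c' a = 0 ∧ c' b = 2)) →
        ¬(i = 0 ∧ c' u' = 2) → ¬(c' u' = 0 ∧ i = 2) →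
        ∀ a b, F.Adj a b → ¬(ext c' i a = 0 ∧ ext c' i b = 2) := by
      intro c' i hv h1 h2 a b hab hcontra
      obtain ⟨e0, e2⟩ := hcontra
      by_cases ha : a = ℓ
      · by_cases hb : b = ℓ
        · rw [ha, hb] at hab; exact F.irrefl hab
        · have hbu : b = u := huniq b (by rw [ha] at hab; exact hab)
          rw [ha, ext_ℓ] at e0
          rw [ext_ne c' i b hb] at e2
          have hbe : (⟨b, hb⟩ : V') = u' := Subtype.ext hbu
          rw [hbe] at e2
          exact h1 ⟨e0, e2⟩
      · by_cases hb : b = ℓ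
        · have hau : a = u := huniq a (by rw [hb] at hab; exact hab.symm)
          rw [hb, ext_ℓ] at e2
          rw [ext_ne c' i a ha] at e0
          have hae : (⟨a, ha⟩ : V') = u' := Subtype.ext hau
          rw [hae] at e0
          exact h2 ⟨e0, e2⟩
        · have hadj' : F'.Adj ⟨a, ha⟩ ⟨b, hb⟩ := hab
          rw [ext_ne c' i a ha] at e0
          rw [ext_ne c' i b hb] at e2
          exact hv _ _ hadj' ⟨e0, e2⟩
    by_cases hℓS : ℓ ∈ S
    · -- leaf in S
      have hlt : n - 1 < n := by omega
      have hS'card : S'.card = S.card - 1 := by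
        rw [hS', Finset.card_subtype, Finset.filter_ne', Finset.card_erase_of_mem hℓS]
      have hs1 : 1 ≤ S.card := Finset.card_pos.mpr ⟨ℓ, hℓS⟩
      have harg : (n - 1) + 1 - S'.card = n + 1 - S.card := by rw [hS'card]; omega
      have hIH := IH (n-1) hlt V' F' hF' hcV' S'
      have hle : Nat.card {c' : V' → Fin 3 // (∀ a b : V', F'.Adj a b → ¬(c' a = 0 ∧ c' b = 2)) ∧
            ∀ v ∈ S', c' v = 1} ≤
          Nat.card {c : V → Fin 3 // (∀ a b, F.Adj a b → ¬(c a = 0 ∧ c b = 2)) ∧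
            ∀ v ∈ S, c v = 1} := by
      
        obtain ⟨g, hginj⟩ : ∃ g : {c' : V' → Fin 3 //
            (∀ a b : V', F'.Adj a b → ¬(c' a = 0 ∧ c' b = 2)) ∧ ∀ v ∈ S', c' v = 1} →
            {c : V → Fin 3 // (∀ a b, F.Adj a b → ¬(c a = 0 ∧ c b = 2)) ∧ ∀ v ∈ S, c v = 1},
            Function.Injective g := by
          refine ⟨fun a =>
            ⟨ext a.1 1,
              ext_valid a.1 1 a.2.1 (fun h => absurd h.1 (by decide))
                (fun h => absurd h.2 (by decide)),
              fun v hv => ?_⟩, ?_⟩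
          · by_cases hvl : v = ℓ
            · rw [hvl, ext_ℓ]
            · rw [ext_ne a.1 1 v hvl]
              exact a.2.2 ⟨v, hvl⟩ (Finset.mem_subtype.mpr hv)
          · intro a b h
            have hval : ext a.1 1 = ext b.1 1 := congrArg Subtype.val h
            exact Subtype.ext (hrest _ _ _ _ hval)
        exact Nat.card_le_card_of_injective g hginj
      rw [harg] at hIH
      exact le_trans hIH hle
    · -- leaf not in S
      set A := {c' : V' → Fin 3 // (∀ a b : V', F'.Adj a b → ¬(c' a = 0 ∧ c' b = 2)) ∧
          ∀ v ∈ S', c' v = 1} with hA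
      set B := {c' : V' → Fin 3 // (∀ a b : V', F'.Adj a b → ¬(c' a = 0 ∧ c' b = 2)) ∧
          ∀ v ∈ insert u' S', c' v = 1} with hB
      have hwhite : ∀ (c' : V' → Fin 3) (i : Fin 3), (∀ v ∈ S', c' v = 1) →
          ∀ v ∈ S, ext c' i v = 1 := by
        intro c' i hSw v hv
        have hvl : v ≠ ℓ := fun h => hℓS (h ▸ hv)
        rw [ext_ne c' i v hvl]
        exact hSw ⟨v, hvl⟩ (Finset.mem_subtype.mpr hv)
      have hlt : n - 1 < n := by omega
      have hS'card : S'.card = S.card := by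
        rw [hS', Finset.card_subtype, Finset.filter_ne', Finset.erase_eq_of_notMem hℓS]
      have hsn : S.card ≤ n - 1 := by
        have hsub : S ⊆ Finset.univ.erase ℓ :=
          Finset.subset_erase.mpr ⟨Finset.subset_univ S, hℓS⟩
        have hcc := Finset.card_le_card hsub
        rw [Finset.card_erase_of_mem (Finset.mem_univ ℓ), Finset.card_univ, hcard] at hcc
        exact hcc
      have hBcard : (insert u' S').card ≤ S.card + 1 := by
        rw [← hS'card]; exact Finset.card_insert_le _ _
      have eA : (n - 1) + 1 - S'.card = n - S.card := by rw [hS'card]; omega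
      have hmB : n - 1 - S.card ≤ (n - 1) + 1 - (insert u' S').card := by omega
      have hfin : pellY (n + 1 - S.card) = 2 * pellY (n - S.card) + pellY (n - 1 - S.card) := by
        have h2 : n + 1 - S.card = (n - 1 - S.card) + 2 := by omega
        have h1 : n - S.card = (n - 1 - S.card) + 1 := by omega
        rw [h2, h1, pellY_rec]
      have compatA : ∀ x : Fin 3, ¬((if x = 0 then (0:Fin 3) else 2) = 0 ∧ x = 2) := by decide
      have compatB : ∀ x : Fin 3, ¬(x = 0 ∧ (if x = 0 then (0:Fin 3) else 2) = 2) := by decide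
      have d1 : ∀ x : Fin 3, ¬((1:Fin 3) = if x = 0 then (0:Fin 3) else 2) := by decide
      have d2 : ∀ x : Fin 3, x = 1 → ¬((if x = 0 then (0:Fin 3) else 2) = 0) := by decide
      have hle : Nat.card ((A ⊕ A) ⊕ B) ≤
          Nat.card {c : V → Fin 3 // (∀ a b, F.Adj a b → ¬(c a = 0 ∧ c b = 2)) ∧
            ∀ v ∈ S, c v = 1} := by
        obtain ⟨Φ, hΦinj⟩ : ∃ Φ : (A ⊕ A) ⊕ B →
            {c : V → Fin 3 // (∀ a b, F.Adj a b → ¬(c a = 0 ∧ c b = 2)) ∧ ∀ v ∈ S, c v = 1},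
            Function.Injective Φ := by
          refine ⟨fun z => match z with
            | .inl (.inl a) =>
                ⟨ext a.1 1,
                  ext_valid a.1 1 a.2.1 (fun h => absurd h.1 (by decide))
                    (fun h => absurd h.2 (by decide)),
                  hwhite a.1 1 a.2.2⟩
            | .inl (.inr a) =>
                ⟨ext a.1 (if a.1 u' = 0 then 0 else 2),
                  ext_valid a.1 _ a.2.1 (compatA (a.1 u')) (compatB (a.1 u')),
                  hwhite a.1 _ a.2.2⟩
            | .inr b =>
                ⟨ext b.1 0,
                  ext_valid b.1 0 b.2.1
                    (fun h => by
                      have hbu := b.2.2 u' (Finset.mem_insert_self _ _)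
                      rw [hbu] at h; exact absurd h.2 (by decide))
                    (fun h => absurd h.2 (by decide)),
                  fun v hv => hwhite b.1 0
                    (fun w hw => b.2.2 w (Finset.mem_insert_of_mem hw)) v hv⟩, ?_⟩
          rintro ((a1 | a1) | b1) ((a2 | a2) | b2) h
          · have hval : ext a1.1 1 = ext a2.1 1 := congrArg Subtype.val h
            have heq : a1 = a2 := Subtype.ext (hrest _ _ _ _ hval)
            rw [heq]
          · have hval : ext a1.1 1 = ext a2.1 (if a2.1 u' = 0 then 0 else 2) :=
              congrArg Subtype.val h
            exact absurd (hℓval _ _ _ _ hval) (d1 _)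
          · have hval : ext a1.1 1 = ext b2.1 0 := congrArg Subtype.val h
            exact absurd (hℓval _ _ _ _ hval) (by decide)
          · have hval : ext a1.1 (if a1.1 u' = 0 then 0 else 2) = ext a2.1 1 :=
              congrArg Subtype.val h
            exact absurd (hℓval _ _ _ _ hval).symm (d1 _)
          · have hval : ext a1.1 (if a1.1 u' = 0 then 0 else 2)
                = ext a2.1 (if a2.1 u' = 0 then 0 else 2) := congrArg Subtype.val h
            have heq : a1 = a2 := Subtype.ext (hrest _ _ _ _ hval)
            rw [heq]
          · have hval : ext a1.1 (if a1.1 u' = 0 then 0 else 2) = ext b2.1 0 :=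
              congrArg Subtype.val h
            have hc := hrest _ _ _ _ hval
            have hi := hℓval _ _ _ _ hval
            have hbu := b2.2.2 u' (Finset.mem_insert_self _ _)
            rw [hc] at hi
            exact absurd hi (d2 _ hbu)
          · have hval : ext b1.1 0 = ext a2.1 1 := congrArg Subtype.val h
            exact absurd (hℓval _ _ _ _ hval) (by decide)
          · have hval : ext b1.1 0 = ext a2.1 (if a2.1 u' = 0 then 0 else 2) :=
              congrArg Subtype.val h
            have hc := hrest _ _ _ _ hval
            have hi := hℓval _ _ _ _ hval
            have hbu := b1.2.2 u' (Finset.mem_insert_self _ _)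
            rw [← hc] at hi
            exact absurd hi.symm (d2 _ hbu)
          · have hval : ext b1.1 0 = ext b2.1 0 := congrArg Subtype.val h
            have heq : b1 = b2 := Subtype.ext (hrest _ _ _ _ hval)
            rw [heq]
        exact Nat.card_le_card_of_injective Φ hΦinj
      have hcD : Nat.card ((A ⊕ A) ⊕ B) = Nat.card A + Nat.card A + Nat.card B := by
        rw [Nat.card_sum, Nat.card_sum]
      have hIHA := IH (n-1) hlt V' F' hF' hcV' S'
      have hIHB := IH (n-1) hlt V' F' hF' hcV' (insert u' S')
      rw [eA] at hIHA
      have hpB : pellY (n - 1 - S.card) ≤ Nat.card B :=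
        le_trans (pellY_mono hmB) hIHB
      calc pellY (n + 1 - S.card)
          = 2 * pellY (n - S.card) + pellY (n - 1 - S.card) := hfin
        _ ≤ 2 * Nat.card A + Nat.card B :=
            Nat.add_le_add (Nat.mul_le_mul_left 2 hIHA) hpB
        _ = Nat.card A + Nat.card A + Nat.card B := by ring
        _ = Nat.card ((A ⊕ A) ⊕ B) := hcD.symm
        _ ≤ _ := hle

private lemma pellY_real (m : ℕ) :
    2 * Real.sqrt 2 * (1 + Real.sqrt 2) ^ m ≤ (pellY (m+2) : ℝ) := by
  have hs : Real.sqrt 2 ^ 2 = 2 := Real.sq_sqrt (by norm_num)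
  have hsn : (0:ℝ) ≤ Real.sqrt 2 := Real.sqrt_nonneg 2
  have hs1 : (1:ℝ) ≤ Real.sqrt 2 := by nlinarith
  induction m using Nat.strong_induction_on with
  | _ m IH =>
    match m with
    | 0 => simp [pellY]; nlinarith
    | 1 =>
      have h3 : pellY 3 = 7 := rfl
      rw [h3]; push_cast; nlinarith
    | (m+2) =>
      have h1 := IH (m+1) (by omega)
      have h2 := IH m (by omega)
      rw [pellY_rec]
      push_cast
      have hpow : (0:ℝ) ≤ (1 + Real.sqrt 2) ^ m := pow_nonneg (by nlinarith) m
      have key : (1 + Real.sqrt 2) ^ (m + 2) = (3 + 2*Real.sqrt 2) * (1 + Real.sqrt 2) ^ m := by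
        rw [pow_add]; nlinarith
      rw [key]
      have e1 : (1 + Real.sqrt 2) ^ (m+1) = (1 + Real.sqrt 2) * (1 + Real.sqrt 2) ^ m := by ring
      rw [e1] at h1
      nlinarith

theorem stmt_18 {V : Type*} [Fintype V] (T : SimpleGraph V) (hT : T.IsTree) :
    (wrCount T : ℝ) ≥ 2 * Real.sqrt 2 * (1 + Real.sqrt 2) ^ (Fintype.card V - 1) := by
  classical
  have hne : Nonempty V := hT.isConnected.nonempty
  have hn1 : 1 ≤ Fintype.card V := Fintype.card_pos
  have he : Fintype.card V - 1 + 2 = Fintype.card V + 1 := by omega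
  have hmb := main_bound (Fintype.card V) V T hT.IsAcyclic rfl ∅
  rw [Finset.card_empty, Nat.sub_zero] at hmb
  have heq : Nat.card {c : V → Fin 3 //
      (∀ a b, T.Adj a b → ¬(c a = 0 ∧ c b = 2)) ∧ ∀ v ∈ (∅ : Finset V), c v = 1}
      = wrCount T := by
    apply Nat.card_congr
    exact Equiv.subtypeEquivRight (fun c => by simp)
  rw [heq] at hmb
  have hreal := pellY_real (Fintype.card V - 1)
  rw [he] at hreal
  rw [ge_iff_le]
  refine le_trans hreal ?_
  exact_mod_cast hmb
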